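/- arXiv:1306.3753 — 3 statements merged into one kernel-verified Lean document; each statement's English description precedes it below -/
import Mathlib

section
/- On S^n × ℝ with the causal relation (x,t) ≤ (x',t') iff d(x,x') ≤ t' - t, for every pair of points p ≤ q the causal diamond J⁺(p) ∩ J⁻(q) = {r : p ≤ r ≤ q} is a compact subset of S^n × ℝ. -/
/-- The unit sphere `Sⁿ` in `ℝ^{n+1}`. -/
abbrev Sph (n : ℕ) := Metric.sphere (0 : EuclideanSpace ℝ (Fin (n+1))) 1

/-- The round (geodesic) distance on the unit sphere: `arccos ⟪x, y⟫`. -/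
noncomputable def sphereDist {n : ℕ} (x y : Sph n) : ℝ :=
  Real.arccos ((inner ℝ (x : EuclideanSpace ℝ (Fin (n+1))) (y : EuclideanSpace ℝ (Fin (n+1)))) : ℝ)

/-- The causal relation of the universal cover of Einstein space-time `Sⁿ × ℝ`. -/
noncomputable def causalLe {n : ℕ} (p q : Sph n × ℝ) : Prop :=
  sphereDist p.1 q.1 ≤ q.2 - p.2

/-- The chronological relation of the universal cover of Einstein space-time. -/
noncomputable def chronLt {n : ℕ} (p q : Sph n × ℝ) : Prop :=
  sphereDist p.1 q.1 < q.2 - p.2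

/-- Causal diamonds of `Sⁿ × ℝ` are compact (global hyperbolicity of `Ẽin`). -/
theorem stmt1 (n : ℕ) (p q : Sph n × ℝ) (hpq : causalLe p q) :
    IsCompact {r : Sph n × ℝ | causalLe p r ∧ causalLe r q} := by
  have hc : Continuous fun r : Sph n × ℝ => (r.1 : EuclideanSpace ℝ (Fin (n+1))) :=
    continuous_subtype_val.comp continuous_fst
  have hd1 : Continuous fun r : Sph n × ℝ => sphereDist p.1 r.1 :=
    Real.continuous_arccos.comp (continuous_const.inner hc)
  have hd2 : Continuous fun r : Sph n × ℝ => sphereDist r.1 q.1 :=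
    Real.continuous_arccos.comp (hc.inner continuous_const)
  have hclosed : IsClosed {r : Sph n × ℝ | causalLe p r ∧ causalLe r q} := by
    apply IsClosed.inter
    · exact isClosed_le hd1 (continuous_snd.sub continuous_const)
    · exact isClosed_le hd2 (continuous_const.sub continuous_snd)
  have hsub : {r : Sph n × ℝ | causalLe p r ∧ causalLe r q} ⊆ Set.univ ×ˢ Set.Icc p.2 q.2 := by
    rintro r ⟨h1, h2⟩
    have n1 : (0:ℝ) ≤ sphereDist p.1 r.1 := Real.arccos_nonneg _
    have n2 : (0:ℝ) ≤ sphereDist r.1 q.1 := Real.arccos_nonneg _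
    exact ⟨trivial, by unfold causalLe at h1 h2; constructor <;> linarith⟩
  exact (isCompact_univ.prod isCompact_Icc).of_isClosed_subset hclosed hsub
end

section
/- Let c : I → S^n × ℝ, c(t) = (x(t), t), with x : I → S^n a 1-Lipschitz map on an interval I ⊆ ℝ. If x is not strictly 1-Lipschitz between two parameters a < b in I (i.e., d(x(a), x(b)) = b − a), then the image of x restricted to [a,b] lies on a minimizing geodesic arc of S^n, and d(x(a), x(s)) = s − a for all s in [a,b]. -/
lemma arccos_le_arccos' {x y : ℝ} (h : x ≤ y) : Real.arccos y ≤ Real.arccos x := by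
  unfold Real.arccos; linarith [Real.monotone_arcsin h]

lemma sphereDist_symm {n : ℕ} (x y : Sph n) : sphereDist x y = sphereDist y x := by
  unfold sphereDist; rw [real_inner_comm]

lemma sphereDist_nonneg {n : ℕ} (x y : Sph n) : 0 ≤ sphereDist x y := Real.arccos_nonneg _

lemma sphereDist_triangle {n : ℕ} (u v w : Sph n) :
    sphereDist u w ≤ sphereDist u v + sphereDist v w := by
  set E := EuclideanSpace ℝ (Fin (n+1))
  obtain ⟨u, hu⟩ := u; obtain ⟨v, hv⟩ := v; obtain ⟨w, hw⟩ := w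
  simp only [mem_sphere_iff_norm, sub_zero] at hu hv hw
  set cα : ℝ := inner ℝ u v with hcα
  set cβ : ℝ := inner ℝ v w with hcβ
  set cγ : ℝ := inner ℝ u w with hcγ
  have hα1 : |cα| ≤ 1 := by
    simpa [hu, hv] using abs_real_inner_le_norm u v
  have hβ1 : |cβ| ≤ 1 := by
    simpa [hv, hw] using abs_real_inner_le_norm v w
  have hγ1 : |cγ| ≤ 1 := by
    simpa [hu, hw] using abs_real_inner_le_norm u w
  set A := Real.arccos cα
  set B := Real.arccos cβ
  show Real.arccos cγ ≤ A + B
  by_cases hAB : Real.pi ≤ A + B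
  · exact le_trans (Real.arccos_le_pi _) hAB
  push_neg at hAB
  -- key inequality: cγ ≥ cos (A+B)
  have huu : (inner ℝ u u : ℝ) = 1 := by rw [real_inner_self_eq_norm_sq, hu]; norm_num
  have hvv : (inner ℝ v v : ℝ) = 1 := by rw [real_inner_self_eq_norm_sq, hv]; norm_num
  have hww : (inner ℝ w w : ℝ) = 1 := by rw [real_inner_self_eq_norm_sq, hw]; norm_num
  have hvu : (inner ℝ v u : ℝ) = cα := by rw [real_inner_comm, ← hcα]
  have hwv : (inner ℝ w v : ℝ) = cβ := by rw [real_inner_comm, ← hcβ]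
  have hup : ‖u - cα • v‖^2 = 1 - cα^2 := by
    rw [← real_inner_self_eq_norm_sq]
    rw [inner_sub_left, inner_sub_right, inner_sub_right, real_inner_smul_left,
      real_inner_smul_left, real_inner_smul_right, real_inner_smul_right,
      huu, hvv, hvu, ← hcα]
    ring
  have hwp : ‖w - cβ • v‖^2 = 1 - cβ^2 := by
    rw [← real_inner_self_eq_norm_sq]
    rw [inner_sub_left, inner_sub_right, inner_sub_right, real_inner_smul_left,
      real_inner_smul_left, real_inner_smul_right, real_inner_smul_right,
      hww, hvv, hwv, ← hcβ]
    ring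
  have hip : (inner ℝ (u - cα • v) (w - cβ • v) : ℝ) = cγ - cα * cβ := by
    rw [inner_sub_left, inner_sub_right, inner_sub_right, real_inner_smul_left,
      real_inner_smul_left, real_inner_smul_right, real_inner_smul_right,
      hvv, ← hcα, ← hcβ, ← hcγ]
    ring
  have hcs : |cγ - cα * cβ| ≤ Real.sqrt (1 - cα^2) * Real.sqrt (1 - cβ^2) := by
    have := abs_real_inner_le_norm (u - cα • v) (w - cβ • v)
    rw [hip] at this
    have h1 : ‖u - cα • v‖ = Real.sqrt (1 - cα^2) := by
      rw [← hup]; rw [Real.sqrt_sq (norm_nonneg _)]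
    have h2 : ‖w - cβ • v‖ = Real.sqrt (1 - cβ^2) := by
      rw [← hwp]; rw [Real.sqrt_sq (norm_nonneg _)]
    rwa [h1, h2] at this
  have hcos : Real.cos (A + B) ≤ cγ := by
    rw [Real.cos_add]
    have hA : Real.cos A = cα := Real.cos_arccos (abs_le.1 hα1).1 (abs_le.1 hα1).2
    have hB : Real.cos B = cβ := Real.cos_arccos (abs_le.1 hβ1).1 (abs_le.1 hβ1).2
    have hsA : Real.sin A = Real.sqrt (1 - cα^2) := Real.sin_arccos cα
    have hsB : Real.sin B = Real.sqrt (1 - cβ^2) := Real.sin_arccos cβ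
    rw [hA, hB, hsA, hsB]
    have := (abs_le.1 hcs).1
    linarith
  calc Real.arccos cγ ≤ Real.arccos (Real.cos (A + B)) := arccos_le_arccos' hcos
    _ = A + B := Real.arccos_cos (add_nonneg (Real.arccos_nonneg _) (Real.arccos_nonneg _)) hAB.le

/-- A causal curve realizing equality of the causal inequality is a lightlike geodesic:
if a `1`-Lipschitz map `x : I → Sⁿ` satisfies `d(x a, x b) = b - a` for some `a < b`,
then on `[a,b]` it is a unit-speed minimizing geodesic arc, and
`d(x a, x s) = s - a` for all `s ∈ [a,b]`. -/
theorem stmt3 (n : ℕ) (I : Set ℝ) (hI : I.OrdConnected) (x : ℝ → Sph n)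
    (hLip : ∀ s ∈ I, ∀ t ∈ I, sphereDist (x s) (x t) ≤ |s - t|)
    (a b : ℝ) (ha : a ∈ I) (hb : b ∈ I) (hab : a < b)
    (heq : sphereDist (x a) (x b) = b - a) :
    (∀ s ∈ Set.Icc a b, ∀ t ∈ Set.Icc a b, sphereDist (x s) (x t) = |s - t|) ∧
    (∀ s ∈ Set.Icc a b, sphereDist (x a) (x s) = s - a) := by
  have hsub : Set.Icc a b ⊆ I := hI.out ha hb
  have key : ∀ s ∈ Set.Icc a b,
      sphereDist (x a) (x s) = s - a ∧ sphereDist (x s) (x b) = b - s := by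
    intro s hs
    have hsI := hsub hs
    have h1 : sphereDist (x a) (x s) ≤ s - a := by
      have := hLip a ha s hsI
      rwa [abs_of_nonpos (by linarith [hs.1]), neg_sub] at this
    have h2 : sphereDist (x s) (x b) ≤ b - s := by
      have := hLip s hsI b hb
      rwa [abs_of_nonpos (by linarith [hs.2]), neg_sub] at this
    have h3 : b - a ≤ sphereDist (x a) (x s) + sphereDist (x s) (x b) := by
      rw [← heq]; exact sphereDist_triangle (x a) (x s) (x b)
    constructor <;> linarith
  refine ⟨?_, fun s hs => (key s hs).1⟩
  intro s hs t ht
  have e1 := (key s hs).1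
  have e2 := (key t ht).1
  rcases le_total s t with h | h
  · rw [abs_of_nonpos (by linarith), neg_sub]
    have hle : sphereDist (x s) (x t) ≤ t - s := by
      have := hLip s (hsub hs) t (hsub ht)
      rwa [abs_of_nonpos (by linarith), neg_sub] at this
    have h4 := sphereDist_triangle (x a) (x s) (x t)
    linarith
  · rw [abs_of_nonneg (by linarith)]
    have hle : sphereDist (x s) (x t) ≤ s - t := by
      have := hLip s (hsub hs) t (hsub ht)
      rwa [abs_of_nonneg (by linarith)] at this
    have h4 := sphereDist_triangle (x a) (x t) (x s)
    linarith [sphereDist_symm (x s) (x t)]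
end

section
/- Let x : ℝ → S^n be a 1-Lipschitz map and suppose that for some t₀ the point (x(t₀ − π), t₀ − π) equals (−x(t₀), t₀ − π), i.e., x(t₀ − π) is antipodal to x(t₀). Then for all s ∈ [t₀ − π, t₀], d(x(t₀), x(s)) = t₀ − s, and x restricted to [t₀ − π, t₀] is a unit-speed minimizing geodesic of S^n. -/
lemma arccos_antitone : Antitone Real.arccos := fun a b h => by
  unfold Real.arccos; linarith [Real.monotone_arcsin h]

lemma inner_le_cos_key {E : Type*} [NormedAddCommGroup E] [InnerProductSpace ℝ E]
    (p a b : E) (hp : ‖p‖ = 1) (ha : ‖a‖ = 1) (hb : ‖b‖ = 1)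
    (α β : ℝ) (hα0 : 0 ≤ α) (hαπ : α ≤ Real.pi) (hβ0 : 0 ≤ β) (hβπ : β ≤ Real.pi)
    (hpa : (inner ℝ p a : ℝ) = Real.cos α) (hpb : (inner ℝ p b : ℝ) = Real.cos β) :
    (inner ℝ a b : ℝ) ≤ Real.cos (α - β) := by
  set a' : E := a - Real.cos α • p with ha'
  set b' : E := b - Real.cos β • p with hb'
  have hpp : (inner ℝ p p : ℝ) = 1 := by
    rw [real_inner_self_eq_norm_sq, hp]; norm_num
  have hna : ‖a'‖ ^ 2 = Real.sin α ^ 2 := by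
    rw [ha', ← real_inner_self_eq_norm_sq]
    simp only [inner_sub_sub_self, inner_smul_left, inner_smul_right, real_inner_smul_left,
      real_inner_smul_right, hpp, real_inner_comm p a, hpa]
    rw [real_inner_self_eq_norm_sq, ha, Real.sin_sq α]
    ring
  have hnb : ‖b'‖ ^ 2 = Real.sin β ^ 2 := by
    rw [hb', ← real_inner_self_eq_norm_sq]
    simp only [inner_sub_sub_self, inner_smul_left, inner_smul_right, real_inner_smul_left,
      real_inner_smul_right, hpp, real_inner_comm p b, hpb]
    rw [real_inner_self_eq_norm_sq, hb, Real.sin_sq β]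
    ring
  have hsa : Real.sin α ≥ 0 := Real.sin_nonneg_of_nonneg_of_le_pi hα0 hαπ
  have hsb : Real.sin β ≥ 0 := Real.sin_nonneg_of_nonneg_of_le_pi hβ0 hβπ
  have hna' : ‖a'‖ = Real.sin α := by
    have h2 : (‖a'‖ - Real.sin α) * (‖a'‖ + Real.sin α) = 0 := by nlinarith
    rcases mul_eq_zero.mp h2 with h | h
    · linarith
    · linarith [norm_nonneg a']
  have hnb' : ‖b'‖ = Real.sin β := by
    have h2 : (‖b'‖ - Real.sin β) * (‖b'‖ + Real.sin β) = 0 := by nlinarith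
    rcases mul_eq_zero.mp h2 with h | h
    · linarith
    · linarith [norm_nonneg b']
  have hiab : (inner ℝ a b : ℝ) = (inner ℝ a' b' : ℝ) + Real.cos α * Real.cos β := by
    have : a = a' + Real.cos α • p := by rw [ha']; abel
    have hbeq : b = b' + Real.cos β • p := by rw [hb']; abel
    have hpa' : (inner ℝ p a' : ℝ) = 0 := by
      rw [ha', inner_sub_right, real_inner_smul_right, hpa, hpp]; ring
    have hpb' : (inner ℝ p b' : ℝ) = 0 := by
      rw [hb', inner_sub_right, real_inner_smul_right, hpb, hpp]; ring
    rw [this, hbeq]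
    simp only [inner_add_add_self, inner_add_left, inner_add_right, real_inner_smul_left,
      real_inner_smul_right, hpp, hpa', hpb', real_inner_comm p a']
    ring_nf
  have hcs : (inner ℝ a' b' : ℝ) ≤ ‖a'‖ * ‖b'‖ := real_inner_le_norm a' b'
  rw [hiab, Real.cos_sub]
  rw [hna', hnb'] at hcs
  linarith

/-- Rigidity: any past causal curve of `Ẽin` joining a point to its conjugate point is a
lightlike geodesic. If `x : ℝ → Sⁿ` is `1`-Lipschitz and `x (t₀ − π)` is antipodal to
`x t₀`, then on `[t₀ − π, t₀]` the map `x` is a unit-speed minimizing geodesic and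
`d(x t₀, x s) = t₀ − s`. -/
theorem stmt17 (n : ℕ) (x : ℝ → Sph n)
    (hLip : ∀ s t : ℝ, sphereDist (x s) (x t) ≤ |s - t|)
    (t₀ : ℝ) (hconj : x (t₀ - Real.pi) = -(x t₀)) :
    (∀ s ∈ Set.Icc (t₀ - Real.pi) t₀, sphereDist (x t₀) (x s) = t₀ - s) ∧
    (∀ s ∈ Set.Icc (t₀ - Real.pi) t₀, ∀ t ∈ Set.Icc (t₀ - Real.pi) t₀,
      sphereDist (x s) (x t) = |s - t|) := by
  have hπ := Real.pi_pos
  have hnorm : ∀ t : ℝ, ‖(x t : EuclideanSpace ℝ (Fin (n+1)))‖ = 1 := fun t =>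
    mem_sphere_zero_iff_norm.mp (x t).2
  have hbd : ∀ s t : ℝ, |(inner ℝ (x s : EuclideanSpace ℝ (Fin (n+1)))
      (x t : EuclideanSpace ℝ (Fin (n+1))) : ℝ)| ≤ 1 := by
    intro s t
    have := abs_real_inner_le_norm (x s : EuclideanSpace ℝ (Fin (n+1)))
      (x t : EuclideanSpace ℝ (Fin (n+1)))
    rwa [hnorm, hnorm, one_mul] at this
  have hcoe : (x (t₀ - Real.pi) : EuclideanSpace ℝ (Fin (n+1))) =
      -(x t₀ : EuclideanSpace ℝ (Fin (n+1))) := by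
    rw [hconj]; exact coe_neg_sphere (x t₀)
  have part1 : ∀ s ∈ Set.Icc (t₀ - Real.pi) t₀, sphereDist (x t₀) (x s) = t₀ - s := by
    intro s hs
    obtain ⟨hs1, hs2⟩ := hs
    have ha : sphereDist (x t₀) (x s) ≤ t₀ - s := by
      have := hLip t₀ s
      rwa [abs_of_nonneg (by linarith)] at this
    have hb : sphereDist (x (t₀ - Real.pi)) (x s) ≤ s - (t₀ - Real.pi) := by
      have := hLip (t₀ - Real.pi) s
      rwa [abs_of_nonpos (by linarith), neg_sub] at this
    have hsum : sphereDist (x t₀) (x s) + sphereDist (x (t₀ - Real.pi)) (x s) = Real.pi := by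
      unfold sphereDist
      rw [hcoe, inner_neg_left]
      rw [Real.arccos_neg]
      ring
    linarith
  have key2 : ∀ s ∈ Set.Icc (t₀ - Real.pi) t₀, ∀ t ∈ Set.Icc (t₀ - Real.pi) t₀, s ≤ t →
      sphereDist (x s) (x t) = t - s := by
    intro s hs t ht hst
    have hin : ∀ u ∈ Set.Icc (t₀ - Real.pi) t₀,
        (inner ℝ (x t₀ : EuclideanSpace ℝ (Fin (n+1)))
          (x u : EuclideanSpace ℝ (Fin (n+1))) : ℝ) = Real.cos (t₀ - u) := by
      intro u hu
      have h1 := part1 u hu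
      unfold sphereDist at h1
      have hb' := abs_le.mp (hbd t₀ u)
      have := Real.cos_arccos hb'.1 hb'.2
      rw [h1] at this
      exact this.symm
    have hkey := inner_le_cos_key (x t₀ : EuclideanSpace ℝ (Fin (n+1)))
      (x s : EuclideanSpace ℝ (Fin (n+1))) (x t : EuclideanSpace ℝ (Fin (n+1)))
      (hnorm t₀) (hnorm s) (hnorm t) (t₀ - s) (t₀ - t)
      (by linarith [hs.2]) (by linarith [hs.1]) (by linarith [ht.2]) (by linarith [ht.1])
      (hin s hs) (hin t ht)
    have heq : t₀ - s - (t₀ - t) = t - s := by ring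
    rw [heq] at hkey
    have hlow : t - s ≤ sphereDist (x s) (x t) := by
      have := arccos_antitone hkey
      rwa [Real.arccos_cos (by linarith) (by linarith [hs.1, ht.2])] at this
    have hup : sphereDist (x s) (x t) ≤ t - s := by
      have := hLip s t
      rwa [abs_of_nonpos (by linarith), neg_sub] at this
    linarith
  refine ⟨part1, fun s hs t ht => ?_⟩
  rcases le_total s t with h | h
  · rw [key2 s hs t ht h, abs_of_nonpos (by linarith), neg_sub]
  · have := key2 t ht s hs h
    unfold sphereDist at this ⊢
    rw [real_inner_comm] at this
    rw [this, abs_of_nonneg (by linarith)]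
end
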